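/- arXiv:1712.05315 — 3 statements merged into one kernel-verified Lean document; each statement's English description precedes it below -/
import Mathlib

section
/- (Weighted semi-hyperboloidal decomposition of the wave operator.) Let u be a C² function on K and let 𝓛 denote the first-order operator 𝓛 := (s/t)²∂_t + 2(x^a/t)∂̲_a (sum over a = 1,2). Then for every (t,x) ∈ K with x ≠ 0: □u(t,x) = (t−r)^{−1/2} t^{−1/2} · 𝓛[ (t−r)^{1/2} t^{1/2} ∂_t u ](t,x) + ((t−r)/(2t²))(2 + 3r/t) ∂_t u(t,x) − Σ_a ∂̲_a ∂̲_a u(t,x). -/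
noncomputable section

open Real MeasureTheory

abbrev Pt := ℝ × ℝ × ℝ

def tc (p : Pt) : ℝ := p.1

def rad (p : Pt) : ℝ := Real.sqrt (p.2.1 ^ 2 + p.2.2 ^ 2)

def sv (p : Pt) : ℝ := Real.sqrt (tc p ^ 2 - rad p ^ 2)

def dir (α : Fin 3) : Pt := if α = 0 then (1, 0, 0) else if α = 1 then (0, 1, 0) else (0, 0, 1)

def xc (a : Fin 2) (p : Pt) : ℝ := if a = 0 then p.2.1 else p.2.2

def pd (α : Fin 3) (u : Pt → ℝ) : Pt → ℝ := fun p => fderiv ℝ u p (dir α)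

def Lb (a : Fin 2) (u : Pt → ℝ) : Pt → ℝ := fun p => xc a p * pd 0 u p + tc p * pd a.succ u p

def pdu (a : Fin 2) (u : Pt → ℝ) : Pt → ℝ := fun p => (xc a p / tc p) * pd 0 u p + pd a.succ u p

def Box (u : Pt → ℝ) : Pt → ℝ := fun p => pd 0 (pd 0 u) p - pd 1 (pd 1 u) p - pd 2 (pd 2 u) p

def Kset : Set Pt := {p | rad p + 1 < tc p}

def Kslab (s0 s1 : ℝ) : Set Pt :=
  {p | p ∈ Kset ∧ Real.sqrt (s0 ^ 2 + rad p ^ 2) ≤ tc p ∧ tc p ≤ Real.sqrt (s1 ^ 2 + rad p ^ 2)}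

def Hyp (σ : ℝ) : Set Pt := {p | tc p = Real.sqrt (σ ^ 2 + rad p ^ 2)}

def L2H (σ : ℝ) (u : Pt → ℝ) : ℝ :=
  Real.sqrt (∫ y : ℝ × ℝ, (u (Real.sqrt (σ ^ 2 + y.1 ^ 2 + y.2 ^ 2), y)) ^ 2)

def pdI : List (Fin 3) → (Pt → ℝ) → Pt → ℝ
  | [], u => u
  | α :: I, u => pd α (pdI I u)

def LbJ : List (Fin 2) → (Pt → ℝ) → Pt → ℝ
  | [], u => u
  | a :: J, u => Lb a (LbJ J u)

/-- The first-order operator `𝓛 := (s/t)²∂_t + 2(x^a/t)∂̲_a`. -/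
def calL (u : Pt → ℝ) : Pt → ℝ :=
  fun p => (sv p / tc p) ^ 2 * pd 0 u p + ∑ a : Fin 2, 2 * (xc a p / tc p) * pdu a u p

private lemma pd_eval {g : Pt → ℝ} {G : Pt →L[ℝ] ℝ} {p : Pt} (h : HasFDerivAt g G p) (α : Fin 3) :
    pd α g p = G (dir α) := by
  simp only [pd, h.fderiv]

set_option maxHeartbeats 2000000 in
/-- Weighted semi-hyperboloidal decomposition of the wave operator:
`□u = (t−r)^{−1/2}t^{−1/2} 𝓛[(t−r)^{1/2}t^{1/2}∂_t u] + ((t−r)/2t²)(2+3r/t)∂_t u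
  − Σ_a ∂̲_a∂̲_au` on `K` away from `x = 0`. -/
theorem weighted_semi_hyperboloidal_decomposition (u : Pt → ℝ)
    (hu : ContDiffOn ℝ 2 u Kset) (p : Pt) (hp : p ∈ Kset) (hx : p.2 ≠ 0) :
    Box u p =
      (Real.sqrt (tc p - rad p))⁻¹ * (Real.sqrt (tc p))⁻¹ *
          calL (fun q => Real.sqrt (tc q - rad q) * Real.sqrt (tc q) * pd 0 u q) p
        + ((tc p - rad p) / (2 * tc p ^ 2)) * (2 + 3 * rad p / tc p) * pd 0 u p
        - ∑ a : Fin 2, pdu a (pdu a u) p := by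
  have hKo : IsOpen Kset := by
    have hc : Continuous rad := by
      unfold rad; fun_prop
    have he : Kset = {q : Pt | rad q + 1 < q.1} := rfl
    rw [he]
    exact isOpen_lt (by fun_prop) continuous_fst
  have hmem : Kset ∈ nhds p := hKo.mem_nhds hp
  have hu2 : ContDiffAt ℝ 2 u p := hu.contDiffAt hmem
  have hFd : HasFDerivAt (fderiv ℝ u) (fderiv ℝ (fderiv ℝ u) p) p :=
    ((hu2.fderiv_right (m := 1) (by norm_num)).differentiableAt one_ne_zero).hasFDerivAt
  have hsym : ∀ v w : Pt, fderiv ℝ (fderiv ℝ u) p v w = fderiv ℝ (fderiv ℝ u) p w v := by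
    intro v w
    refine second_derivative_symmetric_of_eventually (f := u) ?_ hFd v w
    filter_upwards [hKo.mem_nhds hp] with y hy
    exact ((hu.contDiffAt (hKo.mem_nhds hy)).differentiableAt (by norm_num)).hasFDerivAt
  have hpd : ∀ β : Fin 3, HasFDerivAt (pd β u)
      ((fderiv ℝ u p).comp (0 : Pt →L[ℝ] Pt) + (fderiv ℝ (fderiv ℝ u) p).flip (dir β)) p :=
    fun β => hFd.clm_apply (hasFDerivAt_const (dir β) p)
  have h2nd : ∀ α β : Fin 3, pd α (pd β u) p = fderiv ℝ (fderiv ℝ u) p (dir α) (dir β) := by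
    intro α β
    rw [pd_eval (hpd β) α]
    simp
  obtain ⟨t, x1, x2⟩ := p
  simp only [Kset, Set.mem_setOf_eq, rad, tc] at hp
  have hxx : (0:ℝ) < x1 ^ 2 + x2 ^ 2 := by
    rcases eq_or_ne x1 0 with h1 | h1
    · have h2 : x2 ≠ 0 := fun h2 => hx (by simp [h1, h2, Prod.ext_iff])
      positivity
    · positivity
  set R := Real.sqrt (x1 ^ 2 + x2 ^ 2) with hRdef
  have hR0 : 0 < R := Real.sqrt_pos.mpr hxx
  have hR2 : R ^ 2 = x1 ^ 2 + x2 ^ 2 := Real.sq_sqrt hxx.le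
  have ht0 : 0 < t := lt_trans (by positivity) hp
  have htR : 0 < t - R := by linarith
  set A := Real.sqrt (t - R) with hAdef
  set B := Real.sqrt t with hBdef
  have hA2 : A ^ 2 = t - R := Real.sq_sqrt htR.le
  have hB2 : B ^ 2 = t := Real.sq_sqrt ht0.le
  have hA0 : 0 < A := Real.sqrt_pos.mpr htR
  have hB0 : 0 < B := Real.sqrt_pos.mpr ht0
  have hsucc0 : (0 : Fin 2).succ = (1 : Fin 3) := rfl
  have hsucc1 : (1 : Fin 2).succ = (2 : Fin 3) := rfl
  have hdir0 : dir 0 = ((1:ℝ), (0:ℝ), (0:ℝ)) := by simp [dir]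
  have hdir1 : dir 1 = ((0:ℝ), (1:ℝ), (0:ℝ)) := by simp [dir]
  have hdir2 : dir 2 = ((0:ℝ), (0:ℝ), (1:ℝ)) := by simp [dir]
  simp only [Box, calL, pdu, Fin.sum_univ_two, tc, rad, xc, sv, hsucc0, hsucc1,
    Fin.isValue, div_pow, show ((1:Fin 2) = 0) = False by simp, if_false, if_true]
  have epdu0 : pdu 0 u = fun q : Pt => q.2.1 * (q.1)⁻¹ * pd 0 u q + pd 1 u q := by
    funext q
    simp [pdu, xc, tc, hsucc0, div_eq_mul_inv]
  have epdu1 : pdu 1 u = fun q : Pt => q.2.2 * (q.1)⁻¹ * pd 0 u q + pd 2 u q := by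
    funext q
    simp [pdu, xc, tc, hsucc1, div_eq_mul_inv, show ((1:Fin 2) = 0) = False by simp]
  rw [epdu0, epdu1]
  have h1 : HasFDerivAt (fun q : Pt => q.1) (ContinuousLinearMap.fst ℝ ℝ (ℝ × ℝ)) (t, x1, x2) :=
    hasFDerivAt_fst
  have hsnd : HasFDerivAt (fun q : Pt => q.2) (ContinuousLinearMap.snd ℝ ℝ (ℝ × ℝ)) (t, x1, x2) :=
    hasFDerivAt_snd
  have h21 : HasFDerivAt (fun q : Pt => q.2.1) _ (t, x1, x2) := hsnd.fst
  have h22 : HasFDerivAt (fun q : Pt => q.2.2) _ (t, x1, x2) := hsnd.snd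
  have hnorm : HasFDerivAt (fun q : Pt => q.2.1 ^ 2 + q.2.2 ^ 2) _ (t, x1, x2) :=
    ((hasDerivAt_pow 2 x1).comp_hasFDerivAt (f := fun q : Pt => q.2.1) (t, x1, x2) h21).fun_add
      ((hasDerivAt_pow 2 x2).comp_hasFDerivAt (f := fun q : Pt => q.2.2) (t, x1, x2) h22)
  have hrad : HasFDerivAt (fun q : Pt => Real.sqrt (q.2.1 ^ 2 + q.2.2 ^ 2)) _ (t, x1, x2) :=
    hnorm.sqrt (ne_of_gt hxx)
  have hwl : HasFDerivAt (fun q : Pt => Real.sqrt (q.1 - Real.sqrt (q.2.1 ^ 2 + q.2.2 ^ 2))) _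
      (t, x1, x2) := (h1.sub hrad).sqrt (by simpa [← hRdef] using htR.ne')
  have hwr : HasFDerivAt (fun q : Pt => Real.sqrt q.1) _ (t, x1, x2) := h1.sqrt ht0.ne'
  have hwt : HasFDerivAt
      (fun q : Pt => Real.sqrt (q.1 - Real.sqrt (q.2.1 ^ 2 + q.2.2 ^ 2)) * Real.sqrt q.1) _
      (t, x1, x2) := hwl.mul hwr
  have hw : HasFDerivAt
      (fun q : Pt => Real.sqrt (q.1 - Real.sqrt (q.2.1 ^ 2 + q.2.2 ^ 2)) * Real.sqrt q.1 *
        pd 0 u q) _ (t, x1, x2) := hwt.mul (hpd 0)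
  have hinv : HasFDerivAt (fun q : Pt => (q.1)⁻¹) _ (t, x1, x2) :=
    (hasDerivAt_inv ht0.ne').comp_hasFDerivAt (t, x1, x2) h1
  have hg0 : HasFDerivAt (fun q : Pt => q.2.1 * (q.1)⁻¹ * pd 0 u q + pd 1 u q) _ (t, x1, x2) :=
    ((h21.mul hinv).mul (hpd 0)).add (hpd 1)
  have hg1 : HasFDerivAt (fun q : Pt => q.2.2 * (q.1)⁻¹ * pd 0 u q + pd 2 u q) _ (t, x1, x2) :=
    ((h22.mul hinv).mul (hpd 0)).add (hpd 2)
  have hP0 : pd 0 (fun q => Real.sqrt (q.1 - Real.sqrt (q.2.1 ^ 2 + q.2.2 ^ 2)) * Real.sqrt q.1 *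
      pd 0 u q) (t, x1, x2) =
      A * B * (fderiv ℝ (fderiv ℝ u) (t, x1, x2) (1, 0, 0) (1, 0, 0)
        + (t + (t - R)) / (2 * t * (t - R)) * pd 0 u (t, x1, x2)) := by
    rw [pd_eval hw 0]
    simp only [ContinuousLinearMap.add_apply, ContinuousLinearMap.smul_apply,
      ContinuousLinearMap.comp_apply, ContinuousLinearMap.coe_fst', ContinuousLinearMap.coe_snd',
      ContinuousLinearMap.flip_apply, ContinuousLinearMap.zero_apply,
      ContinuousLinearMap.sub_apply, map_zero, smul_eq_mul, hdir0]
    norm_num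
    rw [← hRdef, ← hAdef, ← hBdef, ← hA2, ← hB2]
    field_simp
    ring
  have hP1 : pd 1 (fun q => Real.sqrt (q.1 - Real.sqrt (q.2.1 ^ 2 + q.2.2 ^ 2)) * Real.sqrt q.1 *
      pd 0 u q) (t, x1, x2) =
      A * B * (fderiv ℝ (fderiv ℝ u) (t, x1, x2) (0, 1, 0) (1, 0, 0)
        - x1 / (2 * R * (t - R)) * pd 0 u (t, x1, x2)) := by
    rw [pd_eval hw 1]
    simp only [ContinuousLinearMap.add_apply, ContinuousLinearMap.smul_apply,
      ContinuousLinearMap.comp_apply, ContinuousLinearMap.coe_fst', ContinuousLinearMap.coe_snd',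
      ContinuousLinearMap.flip_apply, ContinuousLinearMap.zero_apply,
      ContinuousLinearMap.sub_apply, map_zero, smul_eq_mul, hdir0, hdir1]
    norm_num
    rw [← hRdef, ← hAdef, ← hBdef, ← hA2, ← hB2]
    field_simp
    ring
  have hP2 : pd 2 (fun q => Real.sqrt (q.1 - Real.sqrt (q.2.1 ^ 2 + q.2.2 ^ 2)) * Real.sqrt q.1 *
      pd 0 u q) (t, x1, x2) =
      A * B * (fderiv ℝ (fderiv ℝ u) (t, x1, x2) (0, 0, 1) (1, 0, 0)
        - x2 / (2 * R * (t - R)) * pd 0 u (t, x1, x2)) := by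
    rw [pd_eval hw 2]
    simp only [ContinuousLinearMap.add_apply, ContinuousLinearMap.smul_apply,
      ContinuousLinearMap.comp_apply, ContinuousLinearMap.coe_fst', ContinuousLinearMap.coe_snd',
      ContinuousLinearMap.flip_apply, ContinuousLinearMap.zero_apply,
      ContinuousLinearMap.sub_apply, map_zero, smul_eq_mul, hdir0, hdir2]
    norm_num
    rw [← hRdef, ← hAdef, ← hBdef, ← hA2, ← hB2]
    field_simp
    ring
  have hg00 : pd 0 (fun q : Pt => q.2.1 * (q.1)⁻¹ * pd 0 u q + pd 1 u q) (t, x1, x2) =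
      x1 / t * fderiv ℝ (fderiv ℝ u) (t, x1, x2) (1, 0, 0) (1, 0, 0)
        + fderiv ℝ (fderiv ℝ u) (t, x1, x2) (1, 0, 0) (0, 1, 0)
        - x1 / t ^ 2 * pd 0 u (t, x1, x2) := by
    rw [pd_eval hg0 0]
    simp only [ContinuousLinearMap.add_apply, ContinuousLinearMap.smul_apply,
      ContinuousLinearMap.comp_apply, ContinuousLinearMap.coe_fst', ContinuousLinearMap.coe_snd',
      ContinuousLinearMap.flip_apply, ContinuousLinearMap.zero_apply,
      ContinuousLinearMap.sub_apply, map_zero, smul_eq_mul, hdir0, hdir1]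
    norm_num
    field_simp
    ring
  have hg01 : pd 1 (fun q : Pt => q.2.1 * (q.1)⁻¹ * pd 0 u q + pd 1 u q) (t, x1, x2) =
      x1 / t * fderiv ℝ (fderiv ℝ u) (t, x1, x2) (0, 1, 0) (1, 0, 0)
        + fderiv ℝ (fderiv ℝ u) (t, x1, x2) (0, 1, 0) (0, 1, 0)
        + 1 / t * pd 0 u (t, x1, x2) := by
    rw [pd_eval hg0 1]
    simp only [ContinuousLinearMap.add_apply, ContinuousLinearMap.smul_apply,
      ContinuousLinearMap.comp_apply, ContinuousLinearMap.coe_fst', ContinuousLinearMap.coe_snd',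
      ContinuousLinearMap.flip_apply, ContinuousLinearMap.zero_apply,
      ContinuousLinearMap.sub_apply, map_zero, smul_eq_mul, hdir0, hdir1]
    norm_num
    field_simp
    ring
  have hg10 : pd 0 (fun q : Pt => q.2.2 * (q.1)⁻¹ * pd 0 u q + pd 2 u q) (t, x1, x2) =
      x2 / t * fderiv ℝ (fderiv ℝ u) (t, x1, x2) (1, 0, 0) (1, 0, 0)
        + fderiv ℝ (fderiv ℝ u) (t, x1, x2) (1, 0, 0) (0, 0, 1)
        - x2 / t ^ 2 * pd 0 u (t, x1, x2) := by
    rw [pd_eval hg1 0]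
    simp only [ContinuousLinearMap.add_apply, ContinuousLinearMap.smul_apply,
      ContinuousLinearMap.comp_apply, ContinuousLinearMap.coe_fst', ContinuousLinearMap.coe_snd',
      ContinuousLinearMap.flip_apply, ContinuousLinearMap.zero_apply,
      ContinuousLinearMap.sub_apply, map_zero, smul_eq_mul, hdir0, hdir2]
    norm_num
    field_simp
    ring
  have hg12 : pd 2 (fun q : Pt => q.2.2 * (q.1)⁻¹ * pd 0 u q + pd 2 u q) (t, x1, x2) =
      x2 / t * fderiv ℝ (fderiv ℝ u) (t, x1, x2) (0, 0, 1) (1, 0, 0)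
        + fderiv ℝ (fderiv ℝ u) (t, x1, x2) (0, 0, 1) (0, 0, 1)
        + 1 / t * pd 0 u (t, x1, x2) := by
    rw [pd_eval hg1 2]
    simp only [ContinuousLinearMap.add_apply, ContinuousLinearMap.smul_apply,
      ContinuousLinearMap.comp_apply, ContinuousLinearMap.coe_fst', ContinuousLinearMap.coe_snd',
      ContinuousLinearMap.flip_apply, ContinuousLinearMap.zero_apply,
      ContinuousLinearMap.sub_apply, map_zero, smul_eq_mul, hdir0, hdir2]
    norm_num
    field_simp
    ring
  have hsv2 : Real.sqrt (t ^ 2 - R ^ 2) ^ 2 = t ^ 2 - R ^ 2 := by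
    refine Real.sq_sqrt ?_
    nlinarith
  rw [← hRdef, ← hAdef, ← hBdef, hsv2, hP0, hP1, hP2, hg00, hg01, hg10, hg12,
    h2nd 0 0, h2nd 1 1, h2nd 2 2]
  simp only [hdir0, hdir1, hdir2]
  rw [hsym ((0:ℝ), (1:ℝ), (0:ℝ)) ((1:ℝ), (0:ℝ), (0:ℝ)), hsym ((0:ℝ), (0:ℝ), (1:ℝ)) ((1:ℝ), (0:ℝ), (0:ℝ))]
  set d00 := fderiv ℝ (fderiv ℝ u) (t, x1, x2) ((1:ℝ), (0:ℝ), (0:ℝ)) ((1:ℝ), (0:ℝ), (0:ℝ)) with hd00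
  set d01 := fderiv ℝ (fderiv ℝ u) (t, x1, x2) ((1:ℝ), (0:ℝ), (0:ℝ)) ((0:ℝ), (1:ℝ), (0:ℝ)) with hd01
  set d02 := fderiv ℝ (fderiv ℝ u) (t, x1, x2) ((1:ℝ), (0:ℝ), (0:ℝ)) ((0:ℝ), (0:ℝ), (1:ℝ)) with hd02
  set d11 := fderiv ℝ (fderiv ℝ u) (t, x1, x2) ((0:ℝ), (1:ℝ), (0:ℝ)) ((0:ℝ), (1:ℝ), (0:ℝ)) with hd11
  set d22 := fderiv ℝ (fderiv ℝ u) (t, x1, x2) ((0:ℝ), (0:ℝ), (1:ℝ)) ((0:ℝ), (0:ℝ), (1:ℝ)) with hd22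
  set v0 := pd 0 u (t, x1, x2) with hv0
  have hAne : A ≠ 0 := ne_of_gt hA0
  have hBne : B ≠ 0 := ne_of_gt hB0
  have htne : t ≠ 0 := ne_of_gt ht0
  have hRne : R ≠ 0 := ne_of_gt hR0
  have htRne : t - R ≠ 0 := ne_of_gt htR
  field_simp
  linear_combination (-(d00 * (2 * t * R ^ 2 - 2 * t ^ 2 * R) +
    v0 * (2 * t ^ 2 - 6 * t * R + 4 * R ^ 2))) * hR2
end
end

section
/- (Kirchhoff kernel integral bound away from the light cone.) For (t,x) with t ≥ 2, x ∈ ℝ², and λ ∈ (0,1), define I(λ) := ∫_{D_λ} ((1−λ)² − |y|²)^{−1/2} dy, where D_λ := { y ∈ ℝ² : |y| ≤ 1−λ and |x/t + y| ≤ λ − 1/t }. Then for every ε₀ > 0 there exists a constant C(ε₀) > 0 such that for all (t,x) ∈ K with t ≥ 2 and (t−|x|)/t > ε₀: ∫_{2/t}^{1} λ^{−2} I(λ) dλ ≤ C(ε₀). -/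
noncomputable section

open Real MeasureTheory

/-- The Kirchhoff kernel integral
`I(λ) = ∫_{D_λ} ((1−λ)² − |y|²)^{−1/2} dy`, where
`D_λ = {y : |y| ≤ 1−λ, |x/t + y| ≤ λ − 1/t}`. -/
def Ikern (t : ℝ) (x : ℝ × ℝ) (lam : ℝ) : ℝ :=
  ∫ y in {y : ℝ × ℝ | Real.sqrt (y.1 ^ 2 + y.2 ^ 2) ≤ 1 - lam ∧
      Real.sqrt ((x.1 / t + y.1) ^ 2 + (x.2 / t + y.2) ^ 2) ≤ lam - 1 / t},
    (Real.sqrt ((1 - lam) ^ 2 - (y.1 ^ 2 + y.2 ^ 2)))⁻¹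

open Set
open scoped ENNReal

lemma cover_aux (a : ℝ) (ha : 0 < a) :
    {y : ℝ | y ^ 2 ≤ a ^ 2} ⊆ ({a, -a} : Set ℝ) ∪ ⋃ n : ℕ,
      {y : ℝ | a * (1 - (4:ℝ)⁻¹ ^ n) ≤ |y| ∧ |y| ≤ a * (1 - (4:ℝ)⁻¹ ^ n / 4)} := by
  intro y hy
  have hya : |y| ≤ a := by
    have := Real.sqrt_le_sqrt hy
    rwa [Real.sqrt_sq_eq_abs, Real.sqrt_sq ha.le] at this
  rcases eq_or_lt_of_le hya with h | h
  · left
    rcases (abs_eq ha.le).mp h with h | h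
    · exact Or.inl h
    · exact Or.inr h
  · right
    have hδ0 : 0 < 1 - |y| / a := by
      have : |y| / a < 1 := (div_lt_one ha).mpr h
      linarith
    have hex : ∃ n : ℕ, (4:ℝ)⁻¹ ^ (n + 1) < 1 - |y| / a := by
      obtain ⟨n, hn⟩ := exists_pow_lt_of_lt_one hδ0 (by norm_num : (4:ℝ)⁻¹ < 1)
      exact ⟨n, lt_of_le_of_lt (pow_le_pow_of_le_one (by norm_num) (by norm_num) (by omega)) hn⟩
    classical
    have hk1 : (4:ℝ)⁻¹ ^ (Nat.find hex + 1) < 1 - |y| / a := Nat.find_spec hex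
    have hk2 : 1 - |y| / a ≤ (4:ℝ)⁻¹ ^ (Nat.find hex) := by
      cases' Nat.eq_zero_or_pos (Nat.find hex) with h0 h0
      · rw [h0, pow_zero]
        have : 0 ≤ |y| / a := div_nonneg (abs_nonneg y) ha.le
        linarith
      · have hlt : Nat.find hex - 1 < Nat.find hex := by omega
        have := Nat.find_min hex hlt
        push_neg at this
        have heq : Nat.find hex - 1 + 1 = Nat.find hex := by omega
        rwa [heq] at this
    refine mem_iUnion.mpr ⟨Nat.find hex, ?_, ?_⟩
    · have h1 : 1 - (4:ℝ)⁻¹ ^ (Nat.find hex) ≤ |y| / a := by linarith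
      calc a * (1 - (4:ℝ)⁻¹ ^ (Nat.find hex)) ≤ a * (|y| / a) :=
            mul_le_mul_of_nonneg_left h1 ha.le
        _ = |y| := by field_simp
    · have hpow : (4:ℝ)⁻¹ ^ (Nat.find hex + 1) = (4:ℝ)⁻¹ ^ (Nat.find hex) / 4 := by
        rw [pow_succ]; ring
      have h1 : |y| / a ≤ 1 - (4:ℝ)⁻¹ ^ (Nat.find hex) / 4 := by
        rw [hpow] at hk1; linarith
      calc |y| = a * (|y| / a) := by field_simp
        _ ≤ a * (1 - (4:ℝ)⁻¹ ^ (Nat.find hex) / 4) := mul_le_mul_of_nonneg_left h1 ha.le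

lemma term_aux (a : ℝ) (ha : 0 < a) (n : ℕ) :
    ∫⁻ y in {y : ℝ | a * (1 - (4:ℝ)⁻¹ ^ n) ≤ |y| ∧ |y| ≤ a * (1 - (4:ℝ)⁻¹ ^ n / 4)},
      ENNReal.ofReal ((Real.sqrt (a ^ 2 - y ^ 2))⁻¹) ≤ ENNReal.ofReal (3 * (2:ℝ)⁻¹ ^ n) := by
  set q : ℝ := (4:ℝ)⁻¹ ^ n with hq
  have hq0 : 0 < q := pow_pos (by norm_num) n
  have hq1 : q ≤ 1 := pow_le_one₀ (by norm_num) (by norm_num)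
  have hsq : ((2:ℝ)⁻¹ ^ n) ^ 2 = q := by
    rw [hq, ← pow_mul, mul_comm n 2, pow_mul]
    norm_num
  have h2n : (0:ℝ) < (2:ℝ)⁻¹ ^ n := pow_pos (by norm_num) n
  set m : ℝ := a * ((2:ℝ)⁻¹ ^ n) / 2 with hm
  have hm0 : 0 < m := by positivity
  -- pointwise bound on the set
  have hbd : ∀ y ∈ {y : ℝ | a * (1 - q) ≤ |y| ∧ |y| ≤ a * (1 - q / 4)},
      ENNReal.ofReal ((Real.sqrt (a ^ 2 - y ^ 2))⁻¹) ≤ ENNReal.ofReal m⁻¹ := by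
    intro y hy
    obtain ⟨hy1, hy2⟩ := hy
    have hyabs : |y| ≤ a * (1 - q / 4) := hy2
    have hkey : m ^ 2 ≤ a ^ 2 - y ^ 2 := by
      have h1 : a - |y| ≥ a * (q / 4) := by nlinarith
      have h2 : a + |y| ≥ a := by linarith [abs_nonneg y]
      have habs : y ^ 2 = |y| ^ 2 := (sq_abs y).symm
      have : m ^ 2 = a ^ 2 * q / 4 := by rw [hm, div_pow, mul_pow, hsq]; norm_num
      nlinarith [abs_nonneg y]
    have hsqrt : m ≤ Real.sqrt (a ^ 2 - y ^ 2) := by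
      have := Real.sqrt_le_sqrt hkey
      rwa [Real.sqrt_sq hm0.le] at this
    exact ENNReal.ofReal_le_ofReal (inv_anti₀ hm0 hsqrt)
  calc ∫⁻ y in {y : ℝ | a * (1 - q) ≤ |y| ∧ |y| ≤ a * (1 - q / 4)},
        ENNReal.ofReal ((Real.sqrt (a ^ 2 - y ^ 2))⁻¹)
      ≤ ∫⁻ _ in {y : ℝ | a * (1 - q) ≤ |y| ∧ |y| ≤ a * (1 - q / 4)},
        ENNReal.ofReal m⁻¹ := setLIntegral_mono measurable_const hbd
    _ = ENNReal.ofReal m⁻¹ *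
        volume {y : ℝ | a * (1 - q) ≤ |y| ∧ |y| ≤ a * (1 - q / 4)} := setLIntegral_const _ _
    _ ≤ ENNReal.ofReal m⁻¹ * ENNReal.ofReal (3 / 2 * (a * q)) := by
        gcongr
        have hsub : {y : ℝ | a * (1 - q) ≤ |y| ∧ |y| ≤ a * (1 - q / 4)} ⊆
            Icc (a * (1 - q)) (a * (1 - q / 4)) ∪
            Icc (-(a * (1 - q / 4))) (-(a * (1 - q))) := by
          intro y ⟨h1, h2⟩
          rcases le_or_gt 0 y with hy0 | hy0
          · left; rw [abs_of_nonneg hy0] at h1 h2; exact ⟨h1, h2⟩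
          · right; rw [abs_of_neg hy0] at h1 h2; constructor <;> linarith
        calc volume {y : ℝ | a * (1 - q) ≤ |y| ∧ |y| ≤ a * (1 - q / 4)}
            ≤ volume (Icc (a * (1 - q)) (a * (1 - q / 4)) ∪
              Icc (-(a * (1 - q / 4))) (-(a * (1 - q)))) := measure_mono hsub
          _ ≤ volume (Icc (a * (1 - q)) (a * (1 - q / 4))) +
              volume (Icc (-(a * (1 - q / 4))) (-(a * (1 - q)))) := measure_union_le _ _
          _ = ENNReal.ofReal (a * (1 - q / 4) - a * (1 - q)) +
              ENNReal.ofReal (-(a * (1 - q)) - -(a * (1 - q / 4))) := by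
              rw [Real.volume_Icc, Real.volume_Icc]
          _ ≤ ENNReal.ofReal (3 / 2 * (a * q)) := by
              rw [← ENNReal.ofReal_add (by nlinarith) (by nlinarith)]
              apply ENNReal.ofReal_le_ofReal; nlinarith
    _ = ENNReal.ofReal (m⁻¹ * (3 / 2 * (a * q))) := by
        rw [← ENNReal.ofReal_mul (by positivity : (0:ℝ) ≤ m⁻¹)]
    _ = ENNReal.ofReal (3 * (2:ℝ)⁻¹ ^ n) := by
        congr 1
        rw [hm, ← hsq]
        have hb : ((2:ℝ)⁻¹ ^ n) ≠ 0 := h2n.ne'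
        field_simp

lemma oneD (a : ℝ) (ha : 0 ≤ a) :
    ∫⁻ y in {y : ℝ | y ^ 2 ≤ a ^ 2}, ENNReal.ofReal ((Real.sqrt (a ^ 2 - y ^ 2))⁻¹) ≤ 6 := by
  rcases eq_or_lt_of_le ha with h0 | h0
  · have hset : {y : ℝ | y ^ 2 ≤ a ^ 2} = {0} := by
      ext y; simp only [mem_setOf_eq, mem_singleton_iff, ← h0]
      constructor
      · intro h; nlinarith [sq_nonneg y, sq_abs y, abs_nonneg y]
      · rintro rfl; simp
    rw [hset]
    rw [setLIntegral_measure_zero _ _ (by simp)]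
    exact zero_le
  · have hsum : ∑' n : ℕ, ENNReal.ofReal (3 * (2:ℝ)⁻¹ ^ n) = 6 := by
      have h1 : ∀ n : ℕ, ENNReal.ofReal (3 * (2:ℝ)⁻¹ ^ n)
          = 3 * (2:ℝ≥0∞)⁻¹ ^ n := by
        intro n
        have h2 : ENNReal.ofReal ((2:ℝ)⁻¹) = (2:ℝ≥0∞)⁻¹ := by
          rw [ENNReal.ofReal_inv_of_pos (by norm_num)]; norm_num
        rw [ENNReal.ofReal_mul (by norm_num), ENNReal.ofReal_pow (by norm_num), h2]
        norm_num
      simp_rw [h1]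
      rw [ENNReal.tsum_mul_left, ENNReal.tsum_geometric, ENNReal.one_sub_inv_two]
      norm_num
    calc ∫⁻ y in {y : ℝ | y ^ 2 ≤ a ^ 2}, ENNReal.ofReal ((Real.sqrt (a ^ 2 - y ^ 2))⁻¹)
        ≤ ∫⁻ y in (({a, -a} : Set ℝ) ∪ ⋃ n : ℕ,
            {y : ℝ | a * (1 - (4:ℝ)⁻¹ ^ n) ≤ |y| ∧ |y| ≤ a * (1 - (4:ℝ)⁻¹ ^ n / 4)}),
            ENNReal.ofReal ((Real.sqrt (a ^ 2 - y ^ 2))⁻¹) :=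
          lintegral_mono_set (cover_aux a h0)
      _ ≤ (∫⁻ y in ({a, -a} : Set ℝ), ENNReal.ofReal ((Real.sqrt (a ^ 2 - y ^ 2))⁻¹))
          + ∫⁻ y in (⋃ n : ℕ,
            {y : ℝ | a * (1 - (4:ℝ)⁻¹ ^ n) ≤ |y| ∧ |y| ≤ a * (1 - (4:ℝ)⁻¹ ^ n / 4)}),
            ENNReal.ofReal ((Real.sqrt (a ^ 2 - y ^ 2))⁻¹) := lintegral_union_le _ _ _
      _ ≤ 0 + ∑' n : ℕ, ∫⁻ y in
            {y : ℝ | a * (1 - (4:ℝ)⁻¹ ^ n) ≤ |y| ∧ |y| ≤ a * (1 - (4:ℝ)⁻¹ ^ n / 4)},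
            ENNReal.ofReal ((Real.sqrt (a ^ 2 - y ^ 2))⁻¹) := by
          gcongr
          · have hz : volume ({a, -a} : Set ℝ) = 0 :=
              ((Set.finite_singleton (-a)).insert a).measure_zero volume
            rw [setLIntegral_measure_zero _ _ hz]
          · exact lintegral_iUnion_le _ _
      _ ≤ 0 + ∑' n : ℕ, ENNReal.ofReal (3 * (2:ℝ)⁻¹ ^ n) := by
          gcongr with n
          exact term_aux a h0 n
      _ = 6 := by rw [zero_add, hsum]

lemma inner_bound (R c : ℝ) (hc : 0 ≤ c) :
    ∫⁻ y in {y : ℝ | c + y ^ 2 ≤ R ^ 2},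
      ENNReal.ofReal ((Real.sqrt (R ^ 2 - (c + y ^ 2)))⁻¹) ≤ 6 := by
  rcases lt_or_ge (R ^ 2 - c) 0 with h | h
  · have : {y : ℝ | c + y ^ 2 ≤ R ^ 2} = ∅ := by
      ext y; simp only [mem_setOf_eq, mem_empty_iff_false, iff_false]
      nlinarith [sq_nonneg y]
    rw [this, Measure.restrict_empty, lintegral_zero_measure]
    exact zero_le
  · have ha2 : Real.sqrt (R ^ 2 - c) ^ 2 = R ^ 2 - c := Real.sq_sqrt h
    have hseteq : {y : ℝ | c + y ^ 2 ≤ R ^ 2} = {y : ℝ | y ^ 2 ≤ Real.sqrt (R ^ 2 - c) ^ 2} := by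
      ext y; simp only [mem_setOf_eq, ha2]; constructor <;> intro <;> linarith
    have hfun : ∀ y : ℝ, R ^ 2 - (c + y ^ 2) = Real.sqrt (R ^ 2 - c) ^ 2 - y ^ 2 := by
      intro y; rw [ha2]; ring
    rw [hseteq]
    simp_rw [hfun]
    exact oneD _ (Real.sqrt_nonneg _)

lemma twoD (R : ℝ) (hR0 : 0 ≤ R) (hR1 : R ≤ 1) :
    ∫⁻ y : ℝ × ℝ in {y : ℝ × ℝ | y.1 ^ 2 + y.2 ^ 2 ≤ R ^ 2},
      ENNReal.ofReal ((Real.sqrt (R ^ 2 - (y.1 ^ 2 + y.2 ^ 2)))⁻¹) ≤ ENNReal.ofReal 12 := by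
  have hA : MeasurableSet {y : ℝ × ℝ | y.1 ^ 2 + y.2 ^ 2 ≤ R ^ 2} :=
    (isClosed_le (by fun_prop) continuous_const).measurableSet
  have hc1 : Continuous fun y : ℝ × ℝ => Real.sqrt (R ^ 2 - (y.1 ^ 2 + y.2 ^ 2)) := by
    fun_prop
  have hg : Measurable fun y : ℝ × ℝ =>
      ENNReal.ofReal ((Real.sqrt (R ^ 2 - (y.1 ^ 2 + y.2 ^ 2)))⁻¹) :=
    hc1.measurable.inv.ennreal_ofReal
  rw [← lintegral_indicator hA]
  rw [Measure.volume_eq_prod, lintegral_prod _ ((hg.indicator hA).aemeasurable)]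
  have hbd : ∀ y₁ : ℝ,
      (∫⁻ y₂ : ℝ, ({y : ℝ × ℝ | y.1 ^ 2 + y.2 ^ 2 ≤ R ^ 2}.indicator
        (fun y : ℝ × ℝ => ENNReal.ofReal ((Real.sqrt (R ^ 2 - (y.1 ^ 2 + y.2 ^ 2)))⁻¹)) (y₁, y₂)))
      ≤ (Icc (-R) R).indicator (fun _ => (6 : ℝ≥0∞)) y₁ := by
    intro y₁
    have hind : ∀ y₂ : ℝ, ({y : ℝ × ℝ | y.1 ^ 2 + y.2 ^ 2 ≤ R ^ 2}.indicator
        (fun y : ℝ × ℝ => ENNReal.ofReal ((Real.sqrt (R ^ 2 - (y.1 ^ 2 + y.2 ^ 2)))⁻¹)) (y₁, y₂))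
        = ({y₂ : ℝ | y₁ ^ 2 + y₂ ^ 2 ≤ R ^ 2}.indicator
          (fun y₂ : ℝ => ENNReal.ofReal ((Real.sqrt (R ^ 2 - (y₁ ^ 2 + y₂ ^ 2)))⁻¹)) y₂) := by
      intro y₂
      by_cases h : y₁ ^ 2 + y₂ ^ 2 ≤ R ^ 2 <;> simp [Set.indicator, h]
    simp_rw [hind]
    have hset2 : MeasurableSet {y₂ : ℝ | y₁ ^ 2 + y₂ ^ 2 ≤ R ^ 2} :=
      (isClosed_le (by fun_prop) continuous_const).measurableSet
    rw [lintegral_indicator hset2]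
    rcases le_or_gt (y₁ ^ 2) (R ^ 2) with hy | hy
    · have hy1 : y₁ ∈ Icc (-R) R := by
        constructor <;> nlinarith [abs_nonneg y₁, sq_abs y₁, neg_abs_le y₁, le_abs_self y₁]
      rw [Set.indicator_of_mem hy1]
      exact inner_bound R (y₁ ^ 2) (sq_nonneg y₁)
    · have hempty : {y₂ : ℝ | y₁ ^ 2 + y₂ ^ 2 ≤ R ^ 2} = ∅ := by
        ext y₂; simp only [mem_setOf_eq, mem_empty_iff_false, iff_false]
        nlinarith [sq_nonneg y₂]
      rw [hempty, Measure.restrict_empty, lintegral_zero_measure]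
      exact zero_le
  calc ∫⁻ y₁ : ℝ, ∫⁻ y₂ : ℝ, ({y : ℝ × ℝ | y.1 ^ 2 + y.2 ^ 2 ≤ R ^ 2}.indicator
        (fun y : ℝ × ℝ => ENNReal.ofReal ((Real.sqrt (R ^ 2 - (y.1 ^ 2 + y.2 ^ 2)))⁻¹)) (y₁, y₂))
      ≤ ∫⁻ y₁ : ℝ, (Icc (-R) R).indicator (fun _ => (6 : ℝ≥0∞)) y₁ := lintegral_mono hbd
    _ = 6 * volume (Icc (-R) R) := by
        rw [lintegral_indicator measurableSet_Icc, setLIntegral_const]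
    _ = 6 * ENNReal.ofReal (R - -R) := by rw [Real.volume_Icc]
    _ ≤ ENNReal.ofReal 12 := by
        have h6 : (6 : ℝ≥0∞) = ENNReal.ofReal 6 := by norm_num
        rw [h6, ← ENNReal.ofReal_mul (by norm_num)]
        apply ENNReal.ofReal_le_ofReal
        linarith

lemma Ikern_eq (t : ℝ) (x : ℝ × ℝ) (lam : ℝ) :
    Ikern t x lam = (∫⁻ y in {y : ℝ × ℝ | Real.sqrt (y.1 ^ 2 + y.2 ^ 2) ≤ 1 - lam ∧
      Real.sqrt ((x.1 / t + y.1) ^ 2 + (x.2 / t + y.2) ^ 2) ≤ lam - 1 / t},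
      ENNReal.ofReal ((Real.sqrt ((1 - lam) ^ 2 - (y.1 ^ 2 + y.2 ^ 2)))⁻¹)).toReal := by
  have hc : Continuous fun y : ℝ × ℝ => Real.sqrt ((1 - lam) ^ 2 - (y.1 ^ 2 + y.2 ^ 2)) := by
    fun_prop
  exact integral_eq_lintegral_of_nonneg_ae
    (Filter.Eventually.of_forall fun y => by positivity)
    hc.measurable.inv.aestronglyMeasurable

lemma Ikern_nonneg (t : ℝ) (x : ℝ × ℝ) (lam : ℝ) : 0 ≤ Ikern t x lam := by
  rw [Ikern_eq]; exact ENNReal.toReal_nonneg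

lemma Ikern_le_12 (t : ℝ) (x : ℝ × ℝ) (lam : ℝ) (h0 : 0 ≤ lam) (h1 : lam ≤ 1) :
    Ikern t x lam ≤ 12 := by
  rw [Ikern_eq]
  have hR0 : (0:ℝ) ≤ 1 - lam := by linarith
  have hsub : {y : ℝ × ℝ | Real.sqrt (y.1 ^ 2 + y.2 ^ 2) ≤ 1 - lam ∧
      Real.sqrt ((x.1 / t + y.1) ^ 2 + (x.2 / t + y.2) ^ 2) ≤ lam - 1 / t} ⊆
      {y : ℝ × ℝ | y.1 ^ 2 + y.2 ^ 2 ≤ (1 - lam) ^ 2} := by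
    rintro y ⟨h, -⟩
    have h2 : Real.sqrt (y.1 ^ 2 + y.2 ^ 2) ^ 2 ≤ (1 - lam) ^ 2 :=
      pow_le_pow_left₀ (Real.sqrt_nonneg _) h 2
    rwa [Real.sq_sqrt (by positivity)] at h2
  have hle := le_trans (lintegral_mono_set hsub) (twoD (1 - lam) hR0 (by linarith))
  calc (∫⁻ y in {y : ℝ × ℝ | Real.sqrt (y.1 ^ 2 + y.2 ^ 2) ≤ 1 - lam ∧
        Real.sqrt ((x.1 / t + y.1) ^ 2 + (x.2 / t + y.2) ^ 2) ≤ lam - 1 / t},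
        ENNReal.ofReal ((Real.sqrt ((1 - lam) ^ 2 - (y.1 ^ 2 + y.2 ^ 2)))⁻¹)).toReal
      ≤ (ENNReal.ofReal 12).toReal := ENNReal.toReal_mono ENNReal.ofReal_ne_top hle
    _ = 12 := ENNReal.toReal_ofReal (by norm_num)

lemma sqrt_tri (a b c d : ℝ) :
    Real.sqrt ((a + c) ^ 2 + (b + d) ^ 2) ≤ Real.sqrt (a ^ 2 + b ^ 2) + Real.sqrt (c ^ 2 + d ^ 2) := by
  have hA := Real.sq_sqrt (by positivity : (0:ℝ) ≤ a ^ 2 + b ^ 2)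
  have hB := Real.sq_sqrt (by positivity : (0:ℝ) ≤ c ^ 2 + d ^ 2)
  have hA0 := Real.sqrt_nonneg (a ^ 2 + b ^ 2)
  have hB0 := Real.sqrt_nonneg (c ^ 2 + d ^ 2)
  have hcs : a * c + b * d ≤ Real.sqrt (a ^ 2 + b ^ 2) * Real.sqrt (c ^ 2 + d ^ 2) := by
    nlinarith [sq_nonneg (a * d - b * c), mul_nonneg hA0 hB0,
      sq_nonneg (Real.sqrt (a ^ 2 + b ^ 2) * Real.sqrt (c ^ 2 + d ^ 2) - (a * c + b * d)),
      sq_nonneg (Real.sqrt (a ^ 2 + b ^ 2) * Real.sqrt (c ^ 2 + d ^ 2) + (a * c + b * d))]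
  calc Real.sqrt ((a + c) ^ 2 + (b + d) ^ 2)
      ≤ Real.sqrt ((Real.sqrt (a ^ 2 + b ^ 2) + Real.sqrt (c ^ 2 + d ^ 2)) ^ 2) :=
        Real.sqrt_le_sqrt (by nlinarith [hcs, hA, hB])
    _ = Real.sqrt (a ^ 2 + b ^ 2) + Real.sqrt (c ^ 2 + d ^ 2) :=
        Real.sqrt_sq (by positivity)

lemma Ikern_small (t : ℝ) (x : ℝ × ℝ) (lam ε : ℝ) (ht : 2 ≤ t) (hε : 0 < ε) (hε2 : ε ≤ 1/2)
    (hrt : Real.sqrt (x.1 ^ 2 + x.2 ^ 2) / t ≤ 1 - ε) (hlam1 : 2 / t ≤ lam)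
    (hlam2 : lam ≤ ε / 4) :
    Ikern t x lam ≤ 8 / Real.sqrt ε * lam ^ 2 := by
  have ht0 : (0:ℝ) < t := by linarith
  have hlam0 : 0 < lam := lt_of_lt_of_le (by positivity) hlam1
  have h1t : 1 / t ≤ lam := le_trans (by rw [div_le_div_iff₀ ht0 ht0]; nlinarith) hlam1
  have hsε0 : 0 < Real.sqrt ε := Real.sqrt_pos.mpr hε
  have hsqε : Real.sqrt (ε / 4) = Real.sqrt ε / 2 := by
    rw [show ε / 4 = ε / 2 ^ 2 by norm_num, Real.sqrt_div hε.le, Real.sqrt_sq (by norm_num : (0:ℝ) ≤ 2)]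
  have hM0 : 0 < Real.sqrt (ε / 4) := Real.sqrt_pos.mpr (by positivity)
  rw [Ikern_eq]
  -- pointwise bound on the set
  have hpt : ∀ y ∈ {y : ℝ × ℝ | Real.sqrt (y.1 ^ 2 + y.2 ^ 2) ≤ 1 - lam ∧
      Real.sqrt ((x.1 / t + y.1) ^ 2 + (x.2 / t + y.2) ^ 2) ≤ lam - 1 / t},
      ENNReal.ofReal ((Real.sqrt ((1 - lam) ^ 2 - (y.1 ^ 2 + y.2 ^ 2)))⁻¹)
        ≤ ENNReal.ofReal ((Real.sqrt (ε / 4))⁻¹) := by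
    rintro y ⟨h1, h2⟩
    have hy2 : (0:ℝ) ≤ y.1 ^ 2 + y.2 ^ 2 := by positivity
    have hxr : Real.sqrt ((-(x.1 / t)) ^ 2 + (-(x.2 / t)) ^ 2)
        = Real.sqrt (x.1 ^ 2 + x.2 ^ 2) / t := by
      rw [show (-(x.1 / t)) ^ 2 + (-(x.2 / t)) ^ 2 = (x.1 ^ 2 + x.2 ^ 2) / t ^ 2 by
          field_simp, Real.sqrt_div (by positivity), Real.sqrt_sq ht0.le]
    have hnorm : Real.sqrt (y.1 ^ 2 + y.2 ^ 2) ≤ (lam - 1 / t) + (1 - ε) := by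
      have heq : y.1 ^ 2 + y.2 ^ 2 = ((x.1 / t + y.1) + -(x.1 / t)) ^ 2
          + ((x.2 / t + y.2) + -(x.2 / t)) ^ 2 := by ring
      calc Real.sqrt (y.1 ^ 2 + y.2 ^ 2)
          ≤ Real.sqrt ((x.1 / t + y.1) ^ 2 + (x.2 / t + y.2) ^ 2)
            + Real.sqrt ((-(x.1 / t)) ^ 2 + (-(x.2 / t)) ^ 2) := by
            rw [heq]; exact sqrt_tri _ _ _ _
        _ ≤ (lam - 1 / t) + (1 - ε) := by
            rw [hxr]; exact add_le_add h2 hrt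
    have hn0 : 0 ≤ Real.sqrt (y.1 ^ 2 + y.2 ^ 2) := Real.sqrt_nonneg _
    have hnsq : Real.sqrt (y.1 ^ 2 + y.2 ^ 2) ^ 2 = y.1 ^ 2 + y.2 ^ 2 := Real.sq_sqrt hy2
    have hA : ε / 2 ≤ 1 - lam - Real.sqrt (y.1 ^ 2 + y.2 ^ 2) := by
      have : 1 / t > 0 := by positivity
      linarith
    have hB : (7:ℝ) / 8 ≤ 1 - lam + Real.sqrt (y.1 ^ 2 + y.2 ^ 2) := by linarith
    have hkey : ε / 4 ≤ (1 - lam) ^ 2 - (y.1 ^ 2 + y.2 ^ 2) := by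
      have hprod : ε / 2 * (7 / 8) ≤ (1 - lam - Real.sqrt (y.1 ^ 2 + y.2 ^ 2))
          * (1 - lam + Real.sqrt (y.1 ^ 2 + y.2 ^ 2)) :=
        mul_le_mul hA hB (by norm_num) (by linarith)
      nlinarith [hnsq]
    have hs : Real.sqrt (ε / 4) ≤ Real.sqrt ((1 - lam) ^ 2 - (y.1 ^ 2 + y.2 ^ 2)) :=
      Real.sqrt_le_sqrt hkey
    exact ENNReal.ofReal_le_ofReal (inv_anti₀ hM0 hs)
  -- measure of the set
  have hsub : {y : ℝ × ℝ | Real.sqrt (y.1 ^ 2 + y.2 ^ 2) ≤ 1 - lam ∧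
      Real.sqrt ((x.1 / t + y.1) ^ 2 + (x.2 / t + y.2) ^ 2) ≤ lam - 1 / t} ⊆
      Icc (-(x.1 / t) - (lam - 1 / t)) (-(x.1 / t) + (lam - 1 / t)) ×ˢ
      Icc (-(x.2 / t) - (lam - 1 / t)) (-(x.2 / t) + (lam - 1 / t)) := by
    rintro y ⟨-, h2⟩
    have habs1 : |x.1 / t + y.1| ≤ lam - 1 / t := by
      have h := Real.sqrt_le_sqrt (le_add_of_nonneg_right (sq_nonneg (x.2 / t + y.2)) :
        (x.1 / t + y.1) ^ 2 ≤ (x.1 / t + y.1) ^ 2 + (x.2 / t + y.2) ^ 2)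
      rw [Real.sqrt_sq_eq_abs] at h
      exact h.trans h2
    have habs2 : |x.2 / t + y.2| ≤ lam - 1 / t := by
      have h := Real.sqrt_le_sqrt (le_add_of_nonneg_left (sq_nonneg (x.1 / t + y.1)) :
        (x.2 / t + y.2) ^ 2 ≤ (x.1 / t + y.1) ^ 2 + (x.2 / t + y.2) ^ 2)
      rw [Real.sqrt_sq_eq_abs] at h
      exact h.trans h2
    rw [abs_le] at habs1 habs2
    exact ⟨⟨by linarith [habs1.1], by linarith [habs1.2]⟩,
      ⟨by linarith [habs2.1], by linarith [habs2.2]⟩⟩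
  have hvol : volume (Icc (-(x.1 / t) - (lam - 1 / t)) (-(x.1 / t) + (lam - 1 / t)) ×ˢ
      Icc (-(x.2 / t) - (lam - 1 / t)) (-(x.2 / t) + (lam - 1 / t)))
      = ENNReal.ofReal (2 * (lam - 1 / t)) * ENNReal.ofReal (2 * (lam - 1 / t)) := by
    rw [Measure.volume_eq_prod, Measure.prod_prod, Real.volume_Icc, Real.volume_Icc]
    congr 2 <;> ring
  have hμ : volume {y : ℝ × ℝ | Real.sqrt (y.1 ^ 2 + y.2 ^ 2) ≤ 1 - lam ∧
      Real.sqrt ((x.1 / t + y.1) ^ 2 + (x.2 / t + y.2) ^ 2) ≤ lam - 1 / t}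
      ≤ ENNReal.ofReal (2 * lam) * ENNReal.ofReal (2 * lam) := by
    refine le_trans (measure_mono hsub) ?_
    rw [hvol]
    have h2l : 2 * (lam - 1 / t) ≤ 2 * lam := by
      have : 0 < 1 / t := by positivity
      linarith
    exact mul_le_mul' (ENNReal.ofReal_le_ofReal h2l) (ENNReal.ofReal_le_ofReal h2l)
  calc (∫⁻ y in {y : ℝ × ℝ | Real.sqrt (y.1 ^ 2 + y.2 ^ 2) ≤ 1 - lam ∧
        Real.sqrt ((x.1 / t + y.1) ^ 2 + (x.2 / t + y.2) ^ 2) ≤ lam - 1 / t},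
        ENNReal.ofReal ((Real.sqrt ((1 - lam) ^ 2 - (y.1 ^ 2 + y.2 ^ 2)))⁻¹)).toReal
      ≤ (ENNReal.ofReal ((Real.sqrt (ε / 4))⁻¹) *
          (ENNReal.ofReal (2 * lam) * ENNReal.ofReal (2 * lam))).toReal := by
        apply ENNReal.toReal_mono
        · exact ENNReal.mul_ne_top ENNReal.ofReal_ne_top
            (ENNReal.mul_ne_top ENNReal.ofReal_ne_top ENNReal.ofReal_ne_top)
        · calc ∫⁻ y in {y : ℝ × ℝ | Real.sqrt (y.1 ^ 2 + y.2 ^ 2) ≤ 1 - lam ∧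
              Real.sqrt ((x.1 / t + y.1) ^ 2 + (x.2 / t + y.2) ^ 2) ≤ lam - 1 / t},
              ENNReal.ofReal ((Real.sqrt ((1 - lam) ^ 2 - (y.1 ^ 2 + y.2 ^ 2)))⁻¹)
            ≤ ∫⁻ _ in {y : ℝ × ℝ | Real.sqrt (y.1 ^ 2 + y.2 ^ 2) ≤ 1 - lam ∧
              Real.sqrt ((x.1 / t + y.1) ^ 2 + (x.2 / t + y.2) ^ 2) ≤ lam - 1 / t},
              ENNReal.ofReal ((Real.sqrt (ε / 4))⁻¹) := setLIntegral_mono measurable_const hpt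
          _ = ENNReal.ofReal ((Real.sqrt (ε / 4))⁻¹) * volume {y : ℝ × ℝ |
              Real.sqrt (y.1 ^ 2 + y.2 ^ 2) ≤ 1 - lam ∧
              Real.sqrt ((x.1 / t + y.1) ^ 2 + (x.2 / t + y.2) ^ 2) ≤ lam - 1 / t} :=
              setLIntegral_const _ _
          _ ≤ ENNReal.ofReal ((Real.sqrt (ε / 4))⁻¹) *
              (ENNReal.ofReal (2 * lam) * ENNReal.ofReal (2 * lam)) := by gcongr
    _ = (Real.sqrt (ε / 4))⁻¹ * (2 * lam) * (2 * lam) := by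
        rw [← ENNReal.ofReal_mul (by positivity), ← ENNReal.ofReal_mul (by positivity),
          ENNReal.toReal_ofReal (by positivity)]
        ring
    _ = 8 / Real.sqrt ε * lam ^ 2 := by
        rw [hsqε]
        field_simp
        ring

/-- Kirchhoff kernel integral bound away from the light cone:
for every `ε₀ > 0` there is `C(ε₀)` with `∫_{2/t}^1 λ⁻² I(λ) dλ ≤ C(ε₀)` whenever
`(t,x) ∈ K`, `t ≥ 2` and `(t−|x|)/t > ε₀`. -/
theorem kirchhoff_kernel_interior (ε0 : ℝ) (hε0 : 0 < ε0) :
    ∃ C > 0, ∀ (t : ℝ) (x : ℝ × ℝ),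
      ((t, x) : Pt) ∈ Kset → 2 ≤ t →
      ε0 < (t - rad (t, x)) / t →
      ∫ lam in (2 / t)..1, lam⁻¹ ^ 2 * Ikern t x lam ≤ C := by
  have hε : 0 < min ε0 (1/2) := lt_min hε0 (by norm_num)
  have hε2 : min ε0 (1/2) ≤ 1/2 := min_le_right _ _
  have hεε0 : min ε0 (1/2) ≤ ε0 := min_le_left _ _
  have hsε0 : 0 < Real.sqrt (min ε0 (1/2)) := Real.sqrt_pos.mpr hε
  refine ⟨8 / Real.sqrt (min ε0 (1/2)) + 192 / (min ε0 (1/2)) ^ 2 + 1, by positivity, ?_⟩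
  intro t x hK ht hlt
  have ht0 : (0:ℝ) < t := by linarith
  have hrt : Real.sqrt (x.1 ^ 2 + x.2 ^ 2) / t ≤ 1 - min ε0 (1/2) := by
    have h : min ε0 (1/2) < (t - Real.sqrt (x.1 ^ 2 + x.2 ^ 2)) / t := by
      simp only [rad] at hlt
      exact lt_of_le_of_lt hεε0 hlt
    rw [lt_div_iff₀ ht0] at h
    rw [div_le_iff₀ ht0]
    nlinarith
  have h2t : 2 / t ≤ 1 := by rw [div_le_one ht0]; linarith
  have hptw : ∀ lam ∈ Set.Icc (2 / t) 1, lam⁻¹ ^ 2 * Ikern t x lam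
      ≤ 8 / Real.sqrt (min ε0 (1/2)) + 192 / (min ε0 (1/2)) ^ 2 := by
    rintro lam ⟨hl1, hl2⟩
    have hlam0 : 0 < lam := lt_of_lt_of_le (by positivity) hl1
    rcases le_or_gt lam (min ε0 (1/2) / 4) with hc | hc
    · have hIk := Ikern_small t x lam (min ε0 (1/2)) ht hε hε2 hrt hl1 hc
      have h1 : lam⁻¹ ^ 2 * Ikern t x lam
          ≤ lam⁻¹ ^ 2 * (8 / Real.sqrt (min ε0 (1/2)) * lam ^ 2) :=
        mul_le_mul_of_nonneg_left hIk (by positivity)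
      have heq : lam⁻¹ ^ 2 * (8 / Real.sqrt (min ε0 (1/2)) * lam ^ 2)
          = 8 / Real.sqrt (min ε0 (1/2)) := by
        field_simp
      have h192 : 0 ≤ 192 / (min ε0 (1/2)) ^ 2 := by positivity
      rw [heq] at h1
      linarith
    · have hIk := Ikern_le_12 t x lam hlam0.le hl2
      have hinv : lam⁻¹ ≤ 4 / min ε0 (1/2) := by
        have h1 : lam⁻¹ ≤ (min ε0 (1/2) / 4)⁻¹ := inv_anti₀ (by positivity) hc.le
        rwa [inv_div] at h1
      have h2 : lam⁻¹ ^ 2 ≤ (4 / min ε0 (1/2)) ^ 2 :=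
        pow_le_pow_left₀ (by positivity) hinv 2
      have h3 : lam⁻¹ ^ 2 * Ikern t x lam ≤ (4 / min ε0 (1/2)) ^ 2 * 12 :=
        mul_le_mul h2 hIk (Ikern_nonneg t x lam) (by positivity)
      have h4 : (4 / min ε0 (1/2)) ^ 2 * 12 = 192 / (min ε0 (1/2)) ^ 2 := by
        rw [div_pow]; ring
      have h8 : 0 ≤ 8 / Real.sqrt (min ε0 (1/2)) := by positivity
      rw [h4] at h3
      linarith
  by_cases hint : IntervalIntegrable (fun lam => lam⁻¹ ^ 2 * Ikern t x lam) volume (2 / t) 1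
  · have hmono := intervalIntegral.integral_mono_on h2t hint
      (intervalIntegrable_const
        (c := 8 / Real.sqrt (min ε0 (1/2)) + 192 / (min ε0 (1/2)) ^ 2)) hptw
    have hconst : ∫ _ in (2 / t)..1,
        (8 / Real.sqrt (min ε0 (1/2)) + 192 / (min ε0 (1/2)) ^ 2)
        = (1 - 2 / t) * (8 / Real.sqrt (min ε0 (1/2)) + 192 / (min ε0 (1/2)) ^ 2) := by
      rw [intervalIntegral.integral_const, smul_eq_mul]
    rw [hconst] at hmono
    have hC0 : 0 ≤ 8 / Real.sqrt (min ε0 (1/2)) + 192 / (min ε0 (1/2)) ^ 2 := by positivity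
    have h2t0 : 0 ≤ 2 / t := by positivity
    nlinarith
  · rw [intervalIntegral.integral_undef hint]
    positivity
end
end

section
/- (Equation satisfied by the normal-form transformed Klein–Gordon unknown.) Let P^{αβ} (α,β ∈ {0,1,2}) be a symmetric constant matrix, let u be a C³ function and v a C² function on an open subset of ℝ×ℝ² satisfying □v + v = P^{αβ}∂_α u ∂_β u. Define w := v − P^{αβ}∂_α u ∂_β u. Then □w + w = −2 P^{αβ}( ∂_α u · ∂_β(□u) + m^{α'β'} ∂_{α'}∂_α u · ∂_{β'}∂_β u ), where m^{α'β'} is the Minkowski metric diag(1,−1,−1). -/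
noncomputable section

open Real MeasureTheory

/-- The Minkowski metric `m = diag(1, −1, −1)` on `ℝ^{1+2}`. -/
def mink (α β : Fin 3) : ℝ := if α = β then (if α = 0 then 1 else -1) else 0

section Aux

lemma pd_congr_on {Ω : Set Pt} (hΩ : IsOpen Ω) {f g : Pt → ℝ}
    (h : ∀ q ∈ Ω, f q = g q) {p : Pt} (hp : p ∈ Ω) (γ : Fin 3) :
    pd γ f p = pd γ g p := by
  have hev : f =ᶠ[nhds p] g := Filter.eventually_iff_exists_mem.2 ⟨Ω, hΩ.mem_nhds hp, h⟩
  simp only [pd, hev.fderiv_eq]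

lemma pd_sub {f g : Pt → ℝ} {q : Pt} (hf : DifferentiableAt ℝ f q)
    (hg : DifferentiableAt ℝ g q) (γ : Fin 3) :
    pd γ (fun x => f x - g x) q = pd γ f q - pd γ g q := by
  simp [pd, fderiv_fun_sub hf hg]

lemma pd_mul {f g : Pt → ℝ} {q : Pt} (hf : DifferentiableAt ℝ f q)
    (hg : DifferentiableAt ℝ g q) (γ : Fin 3) :
    pd γ (fun x => f x * g x) q = pd γ f q * g q + f q * pd γ g q := by
  simp [pd, fderiv_fun_mul hf hg]; ring

lemma pd_const_mul {f : Pt → ℝ} {q : Pt} (hf : DifferentiableAt ℝ f q) (c : ℝ) (γ : Fin 3) :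
    pd γ (fun x => c * f x) q = c * pd γ f q := by
  simp [pd, fderiv_const_mul hf c]

lemma pd_sum {ι : Type*} (s : Finset ι) {f : ι → Pt → ℝ} {q : Pt}
    (hf : ∀ i ∈ s, DifferentiableAt ℝ (f i) q) (γ : Fin 3) :
    pd γ (fun x => ∑ i ∈ s, f i x) q = ∑ i ∈ s, pd γ (f i) q := by
  simp [pd, fderiv_fun_sum hf]

lemma pd_comm {f : Pt → ℝ} {q : Pt} (hf : ContDiffAt ℝ 2 f q) (γ δ : Fin 3) :
    pd γ (pd δ f) q = pd δ (pd γ f) q := by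
  have hdf : DifferentiableAt ℝ (fderiv ℝ f) q :=
    (hf.fderiv_right (m := 1) (by norm_num)).differentiableAt (by norm_num)
  have key : ∀ a b : Fin 3, pd a (pd b f) q = fderiv ℝ (fderiv ℝ f) q (dir a) (dir b) := by
    intro a b
    have h := fderiv_clm_apply (c := fderiv ℝ f) (u := fun _ => dir b) (x := q)
      hdf (differentiableAt_const _)
    have h0 : pd a (pd b f) q
        = fderiv ℝ (fun y => (fderiv ℝ f y) ((fun _ => dir b) y)) q (dir a) := rfl
    rw [h0, h]
    simp
  rw [key, key, (hf.isSymmSndFDerivAt (by simp [minSmoothness_of_isRCLikeNormedField])).eq]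

lemma pd_contDiffOn {Ω : Set Pt} (hΩ : IsOpen Ω) {f : Pt → ℝ} {n m : WithTop ℕ∞}
    (hf : ContDiffOn ℝ n f Ω) (hmn : m + 1 ≤ n) (γ : Fin 3) :
    ContDiffOn ℝ m (pd γ f) Ω :=
  (hf.fderiv_of_isOpen hΩ hmn).clm_apply contDiffOn_const

lemma pd_bil {f g : Fin 3 → Pt → ℝ} {q : Pt} (c : Fin 3 → Fin 3 → ℝ)
    (hf : ∀ i, DifferentiableAt ℝ (f i) q) (hg : ∀ i, DifferentiableAt ℝ (g i) q) (γ : Fin 3) :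
    pd γ (fun x => ∑ α : Fin 3, ∑ β : Fin 3, c α β * f α x * g β x) q
      = ∑ α : Fin 3, ∑ β : Fin 3,
          c α β * (pd γ (f α) q * g β q + f α q * pd γ (g β) q) := by
  have hterm : ∀ α β : Fin 3, DifferentiableAt ℝ (fun x => c α β * f α x * g β x) q :=
    fun α β => ((hf α).const_mul _).mul (hg β)
  have h1 := pd_sum (f := fun α x => ∑ β : Fin 3, c α β * f α x * g β x) Finset.univ
    (fun α _ => DifferentiableAt.fun_sum (fun β _ => hterm α β)) γ
  rw [h1]
  refine Finset.sum_congr rfl fun α _ => ?_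
  have h2 := pd_sum (f := fun β x => c α β * f α x * g β x) Finset.univ
    (fun β _ => hterm α β) γ
  rw [h2]
  refine Finset.sum_congr rfl fun β _ => ?_
  have h3 := pd_mul (f := fun x => c α β * f α x) (g := g β) ((hf α).const_mul _) (hg β) γ
  have h4 := pd_const_mul (hf α) (c α β) γ
  rw [show (fun x => c α β * f α x * g β x) = (fun x => (c α β * f α x) * g β x) from rfl]
  rw [h3, h4]; ring

lemma pd_bil2 {f g h k : Fin 3 → Fin 3 → Pt → ℝ} {q : Pt} (c : Fin 3 → Fin 3 → ℝ)
    (hf : ∀ i j, DifferentiableAt ℝ (f i j) q) (hg : ∀ i j, DifferentiableAt ℝ (g i j) q)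
    (hh : ∀ i j, DifferentiableAt ℝ (h i j) q) (hk : ∀ i j, DifferentiableAt ℝ (k i j) q)
    (γ : Fin 3) :
    pd γ (fun x => ∑ α : Fin 3, ∑ β : Fin 3,
        c α β * (f α β x * g α β x + h α β x * k α β x)) q
      = ∑ α : Fin 3, ∑ β : Fin 3, c α β *
          ((pd γ (f α β) q * g α β q + f α β q * pd γ (g α β) q)
            + (pd γ (h α β) q * k α β q + h α β q * pd γ (k α β) q)) := by
  have hterm : ∀ α β : Fin 3,
      DifferentiableAt ℝ (fun x => c α β * (f α β x * g α β x + h α β x * k α β x)) q :=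
    fun α β => (((hf α β).mul (hg α β)).add ((hh α β).mul (hk α β))).const_mul _
  have h1 := pd_sum
    (f := fun α x => ∑ β : Fin 3, c α β * (f α β x * g α β x + h α β x * k α β x)) Finset.univ
    (fun α _ => DifferentiableAt.fun_sum (fun β _ => hterm α β)) γ
  rw [h1]
  refine Finset.sum_congr rfl fun α _ => ?_
  have h2 := pd_sum
    (f := fun β x => c α β * (f α β x * g α β x + h α β x * k α β x)) Finset.univ
    (fun β _ => hterm α β) γ
  rw [h2]
  refine Finset.sum_congr rfl fun β _ => ?_
  have h3 := pd_const_mul (f := fun x => f α β x * g α β x + h α β x * k α β x)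
    (((hf α β).mul (hg α β)).add ((hh α β).mul (hk α β))) (c α β) γ
  rw [h3]
  have h4 : pd γ (fun x => f α β x * g α β x + h α β x * k α β x) q
      = pd γ (fun x => f α β x * g α β x) q + pd γ (fun x => h α β x * k α β x) q := by
    show fderiv ℝ _ q (dir γ) = fderiv ℝ _ q (dir γ) + fderiv ℝ _ q (dir γ)
    rw [fderiv_fun_add (f := fun x => f α β x * g α β x) (g := fun x => h α β x * k α β x) ((hf α β).mul (hg α β)) ((hh α β).mul (hk α β))]; rfl
  rw [h4, pd_mul (hf α β) (hg α β), pd_mul (hh α β) (hk α β)]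

end Aux

section Aux2

def QF (P : Fin 3 → Fin 3 → ℝ) (u : Pt → ℝ) : Pt → ℝ :=
  fun q => ∑ α : Fin 3, ∑ β : Fin 3, P α β * pd α u q * pd β u q

end Aux2


set_option maxHeartbeats 1000000 in
/-- Equation satisfied by the normal-form transformed Klein–Gordon unknown
`w := v − P^{αβ}∂_α u ∂_β u`. -/
theorem normal_form_equation (P : Fin 3 → Fin 3 → ℝ) (hPsymm : ∀ α β, P α β = P β α)
    (Ω : Set Pt) (hΩ : IsOpen Ω) (u v : Pt → ℝ)
    (hu : ContDiffOn ℝ 3 u Ω) (hv : ContDiffOn ℝ 2 v Ω)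
    (heq : ∀ p ∈ Ω, Box v p + v p = ∑ α : Fin 3, ∑ β : Fin 3, P α β * pd α u p * pd β u p) :
    ∀ p ∈ Ω,
      Box (fun q => v q - ∑ α : Fin 3, ∑ β : Fin 3, P α β * pd α u q * pd β u q) p
          + (v p - ∑ α : Fin 3, ∑ β : Fin 3, P α β * pd α u p * pd β u p)
        = -2 * ∑ α : Fin 3, ∑ β : Fin 3, P α β *
            (pd α u p * pd β (Box u) p
              + ∑ α' : Fin 3, ∑ β' : Fin 3,
                  mink α' β' * pd α' (pd α u) p * pd β' (pd β u) p) := by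
  intro p hp
  -- smoothness facts
  have hu2 : ∀ γ : Fin 3, ContDiffOn ℝ 2 (pd γ u) Ω := fun γ =>
    pd_contDiffOn hΩ hu (by norm_num) γ
  have hu1 : ∀ γ δ : Fin 3, ContDiffOn ℝ 1 (pd δ (pd γ u)) Ω := fun γ δ =>
    pd_contDiffOn hΩ (hu2 γ) (by norm_num) δ
  have du1 : ∀ (γ : Fin 3) (q : Pt), q ∈ Ω → DifferentiableAt ℝ (pd γ u) q := fun γ q hq =>
    ((hu2 γ).contDiffAt (hΩ.mem_nhds hq)).differentiableAt (by norm_num)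
  have du2 : ∀ (γ δ : Fin 3) (q : Pt), q ∈ Ω → DifferentiableAt ℝ (pd δ (pd γ u)) q :=
    fun γ δ q hq => ((hu1 γ δ).contDiffAt (hΩ.mem_nhds hq)).differentiableAt (by norm_num)
  have hQ2 : ContDiffOn ℝ 2 (QF P u) Ω := by
    refine ContDiffOn.sum fun α _ => ContDiffOn.sum fun β _ => ?_
    exact ((contDiffOn_const.mul (hu2 α)).mul (hu2 β))
  have dQ : ∀ (q : Pt), q ∈ Ω → DifferentiableAt ℝ (QF P u) q := fun q hq =>
    (hQ2.contDiffAt (hΩ.mem_nhds hq)).differentiableAt (by norm_num)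
  have hQ1 : ∀ γ : Fin 3, ContDiffOn ℝ 1 (pd γ (QF P u)) Ω := fun γ =>
    pd_contDiffOn hΩ hQ2 (by norm_num) γ
  have dpQ : ∀ γ : Fin 3, DifferentiableAt ℝ (pd γ (QF P u)) p := fun γ =>
    ((hQ1 γ).contDiffAt (hΩ.mem_nhds hp)).differentiableAt (by norm_num)
  have dv : ∀ (q : Pt), q ∈ Ω → DifferentiableAt ℝ v q := fun q hq =>
    (hv.contDiffAt (hΩ.mem_nhds hq)).differentiableAt (by norm_num)
  have dpv : ∀ γ : Fin 3, DifferentiableAt ℝ (pd γ v) p := fun γ =>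
    (((pd_contDiffOn hΩ hv (m := 1) (by norm_num) γ)).contDiffAt (hΩ.mem_nhds hp)).differentiableAt (by norm_num)
  -- first derivative of QF on Ω
  have pdQF : ∀ (γ : Fin 3) (q : Pt), q ∈ Ω →
      pd γ (QF P u) q = ∑ α : Fin 3, ∑ β : Fin 3,
        P α β * (pd γ (pd α u) q * pd β u q + pd α u q * pd γ (pd β u) q) := by
    intro γ q hq
    exact pd_bil (f := fun α => pd α u) (g := fun β => pd β u) P
      (fun i => du1 i q hq) (fun i => du1 i q hq) γ
  -- second derivatives of QF at p
  have pdpdQF : ∀ γ δ : Fin 3,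
      pd δ (pd γ (QF P u)) p = ∑ α : Fin 3, ∑ β : Fin 3, P α β *
        ((pd δ (pd γ (pd α u)) p * pd β u p + pd γ (pd α u) p * pd δ (pd β u) p)
          + (pd δ (pd α u) p * pd γ (pd β u) p + pd α u p * pd δ (pd γ (pd β u)) p)) := by
    intro γ δ
    have h1 := pd_congr_on hΩ (f := pd γ (QF P u))
      (g := fun q => ∑ α : Fin 3, ∑ β : Fin 3,
        P α β * (pd γ (pd α u) q * pd β u q + pd α u q * pd γ (pd β u) q))
      (pdQF γ) hp δ
    rw [h1]
    exact pd_bil2 (f := fun α β => pd γ (pd α u)) (g := fun α β => pd β u)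
      (h := fun α β => pd α u) (k := fun α β => pd γ (pd β u)) P
      (fun i j => du2 i γ p hp) (fun i j => du1 j p hp)
      (fun i j => du1 i p hp) (fun i j => du2 j γ p hp) δ
  -- commutation of derivatives
  have hswapΩ : ∀ (γ δ : Fin 3) (q : Pt), q ∈ Ω → pd γ (pd δ u) q = pd δ (pd γ u) q :=
    fun γ δ q hq => pd_comm ((hu.contDiffAt (hΩ.mem_nhds hq)).of_le (by norm_num)) γ δ
  have hcomm3 : ∀ a γ : Fin 3, pd γ (pd γ (pd a u)) p = pd a (pd γ (pd γ u)) p := by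
    intro a γ
    have hfC2 : ContDiffAt ℝ 2 (pd γ u) p := (hu2 γ).contDiffAt (hΩ.mem_nhds hp)
    have h1 : pd a (pd γ (pd γ u)) p = pd γ (pd a (pd γ u)) p := pd_comm hfC2 a γ
    have h2 : pd γ (pd a (pd γ u)) p = pd γ (pd γ (pd a u)) p :=
      pd_congr_on hΩ (fun q hq => hswapΩ a γ q hq) hp γ
    rw [h1, h2]
  have hBoxcomm : ∀ a : Fin 3, Box (pd a u) p = pd a (Box u) p := by
    intro a
    have hdiff : ∀ γ : Fin 3, DifferentiableAt ℝ (pd γ (pd γ u)) p := fun γ => du2 γ γ p hp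
    have h1 : pd a (Box u) p
        = pd a (fun x => pd 0 (pd 0 u) x - pd 1 (pd 1 u) x - pd 2 (pd 2 u) x) p := rfl
    have h2 := pd_sub (f := fun x => pd 0 (pd 0 u) x - pd 1 (pd 1 u) x) (g := pd 2 (pd 2 u))
      ((hdiff 0).sub (hdiff 1)) (hdiff 2) a
    have h3 := pd_sub (f := pd 0 (pd 0 u)) (g := pd 1 (pd 1 u)) (hdiff 0) (hdiff 1) a
    show pd 0 (pd 0 (pd a u)) p - pd 1 (pd 1 (pd a u)) p - pd 2 (pd 2 (pd a u)) p = _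
    rw [hcomm3 a 0, hcomm3 a 1, hcomm3 a 2, h1, h2, h3]
  -- Box of the difference
  have hsub2 : ∀ γ : Fin 3,
      pd γ (pd γ (fun x => v x - QF P u x)) p = pd γ (pd γ v) p - pd γ (pd γ (QF P u)) p := by
    intro γ
    have h1 : ∀ (q : Pt), q ∈ Ω →
        pd γ (fun x => v x - QF P u x) q = pd γ v q - pd γ (QF P u) q := fun q hq =>
      pd_sub (dv q hq) (dQ q hq) γ
    have h2 := pd_congr_on hΩ (f := pd γ (fun x => v x - QF P u x))
      (g := fun q => pd γ v q - pd γ (QF P u) q) h1 hp γ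
    rw [h2]
    exact pd_sub (f := pd γ v) (g := pd γ (QF P u)) (dpv γ) (dpQ γ) γ
  have hBoxsub : Box (fun x => v x - QF P u x) p = Box v p - Box (QF P u) p := by
    show pd 0 (pd 0 (fun x => v x - QF P u x)) p - pd 1 (pd 1 (fun x => v x - QF P u x)) p
        - pd 2 (pd 2 (fun x => v x - QF P u x)) p = _
    rw [hsub2 0, hsub2 1, hsub2 2]
    show _ = (pd 0 (pd 0 v) p - pd 1 (pd 1 v) p - pd 2 (pd 2 v) p)
      - (pd 0 (pd 0 (QF P u)) p - pd 1 (pd 1 (QF P u)) p - pd 2 (pd 2 (QF P u)) p)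
    ring
  -- the key identity for Box (QF P u)
  have hBQ : Box (QF P u) p = 2 * ∑ α : Fin 3, ∑ β : Fin 3, P α β *
      (pd α u p * pd β (Box u) p
        + ∑ α' : Fin 3, ∑ β' : Fin 3,
            mink α' β' * pd α' (pd α u) p * pd β' (pd β u) p) := by
    show pd 0 (pd 0 (QF P u)) p - pd 1 (pd 1 (QF P u)) p - pd 2 (pd 2 (QF P u)) p = _
    rw [pdpdQF 0 0, pdpdQF 1 1, pdpdQF 2 2]
    simp only [← hBoxcomm]
    simp only [Box]
    simp only [mink, Fin.sum_univ_three, Fin.reduceEq, reduceIte]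
    simp only [hPsymm 1 0, hPsymm 2 0, hPsymm 2 1]
    ring
  -- conclusion
  have heqp : Box v p + v p = QF P u p := heq p hp
  show Box (fun q => v q - QF P u q) p + (v p - QF P u p)
    = -2 * ∑ α : Fin 3, ∑ β : Fin 3, P α β *
        (pd α u p * pd β (Box u) p
          + ∑ α' : Fin 3, ∑ β' : Fin 3,
              mink α' β' * pd α' (pd α u) p * pd β' (pd β u) p)
  rw [hBoxsub]
  linarith [hBQ, heqp]
end
end
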